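/- Let Δ_1, …, Δ_r be a centered proper nef-partition in ℝ^d, and for a nonempty I ⊆ {1, …, r} set Δ^I := Σ_{i∈I} Δ_i (Minkowski sum). Call a nonempty subset I ⊆ {1, …, r} irreducible if 0 lies in the relative interior of Δ^I and no nonempty proper subset I' ⊊ I satisfies that 0 lies in the relative interior of Δ^{I'}. Then any two distinct irreducible subsets of {1, …, r} are disjoint. -/

import Mathlib

open Pointwise

noncomputable section

/-- A point of `ℝ^n` all of whose coordinates are integers (a lattice point of `ℤ^n`). -/
def IsLatticePt {n : ℕ} (x : Fin n → ℝ) : Prop := ∀ k, ∃ m : ℤ, x k = (m : ℝ)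

/-- A lattice polytope: the convex hull of finitely many lattice points. -/
def IsLatticePoly {n : ℕ} (P : Set (Fin n → ℝ)) : Prop :=
  ∃ V : Finset (Fin n → ℝ), V.Nonempty ∧ (∀ v ∈ V, IsLatticePt v) ∧
    P = convexHull ℝ (V : Set (Fin n → ℝ))

/-- The standard inner product pairing on `ℝ^n`. -/
def pairR {n : ℕ} (x y : Fin n → ℝ) : ℝ := ∑ k, x k * y k

/-- The dual polytope `P* = {y : ⟨x,y⟩ ≥ -1 ∀ x ∈ P}`. -/
def dualPoly {n : ℕ} (P : Set (Fin n → ℝ)) : Set (Fin n → ℝ) :=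
  {y | ∀ x ∈ P, -1 ≤ pairR x y}

/-- A reflexive polytope: a lattice polytope with `0` in its interior whose dual
polytope is again a lattice polytope. -/
def IsReflexivePoly {n : ℕ} (P : Set (Fin n → ℝ)) : Prop :=
  IsLatticePoly P ∧ (0 : Fin n → ℝ) ∈ interior P ∧ IsLatticePoly (dualPoly P)

/-- The dimension of a polytope: the dimension of the direction of its affine span. -/
def polyDim {n : ℕ} (P : Set (Fin n → ℝ)) : ℕ :=
  Module.finrank ℝ (affineSpan ℝ P).direction

/-- A (full-dimensional) Gorenstein polytope of index `r`: `rP` has `m` as its unique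
interior lattice point and `rP - m` is reflexive. -/
def IsGorensteinPoly {n : ℕ} (P : Set (Fin n → ℝ)) (r : ℕ) (m : Fin n → ℝ) : Prop :=
  IsLatticePoly P ∧ IsLatticePt m ∧
  (∀ x, IsLatticePt x → (x ∈ interior ((r : ℝ) • P) ↔ x = m)) ∧
  IsReflexivePoly ((fun x => x - m) '' ((r : ℝ) • P))

/-- `y` is a point of the lattice dual to the (saturated) lattice `ℤ^n ∩ W` inside `W`. -/
def IsDualLatticePt {n : ℕ} (W : Submodule ℝ (Fin n → ℝ)) (y : Fin n → ℝ) : Prop :=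
  y ∈ W ∧ ∀ x ∈ W, IsLatticePt x → ∃ m : ℤ, pairR x y = (m : ℝ)

/-- Reflexivity of a (possibly lower-dimensional) lattice polytope inside its linear
span: `0` is in the relative interior and the dual polytope taken inside the linear
span is a lattice polytope with respect to the dual lattice. -/
def IsReflexiveIn {n : ℕ} (P : Set (Fin n → ℝ)) : Prop :=
  IsLatticePoly P ∧ (0 : Fin n → ℝ) ∈ intrinsicInterior ℝ P ∧
  ∃ V : Finset (Fin n → ℝ), V.Nonempty ∧
    (∀ v ∈ V, IsDualLatticePt (Submodule.span ℝ P) v) ∧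
    {y | y ∈ Submodule.span ℝ P ∧ ∀ x ∈ P, -1 ≤ pairR x y} =
      convexHull ℝ (V : Set (Fin n → ℝ))

/-- Gorenstein polytope of index `r` (possibly lower-dimensional): `rP` has `m` as its
unique relative-interior lattice point and `rP - m` is reflexive within its span. -/
def IsGorensteinIn {n : ℕ} (P : Set (Fin n → ℝ)) (r : ℕ) (m : Fin n → ℝ) : Prop :=
  IsLatticePoly P ∧ IsLatticePt m ∧
  (∀ x, IsLatticePt x → (x ∈ intrinsicInterior ℝ ((r : ℝ) • P) ↔ x = m)) ∧
  IsReflexiveIn ((fun x => x - m) '' ((r : ℝ) • P))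

/-- The Minkowski sum `Δ 0 + ⋯ + Δ (r-1)` of a family of sets. -/
def minkSum {n r : ℕ} (Δ : Fin r → Set (Fin n → ℝ)) : Set (Fin n → ℝ) :=
  {x | ∃ f : Fin r → (Fin n → ℝ), (∀ i, f i ∈ Δ i) ∧ x = ∑ i, f i}

/-- The Minkowski sum `Σ_{i ∈ I} Δ i`. -/
def minkSumOver {n r : ℕ} (I : Finset (Fin r)) (Δ : Fin r → Set (Fin n → ℝ)) :
    Set (Fin n → ℝ) :=
  {x | ∃ f : Fin r → (Fin n → ℝ), (∀ i ∈ I, f i ∈ Δ i) ∧ x = ∑ i ∈ I, f i}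

/-- The point `x × e_i ∈ ℝ^d × ℝ^r`. -/
def cayleyPt {d r : ℕ} (x : Fin d → ℝ) (i : Fin r) : Fin (d + r) → ℝ :=
  Fin.append x (fun j => if j = i then 1 else 0)

/-- The Cayley polytope `Δ 0 * ⋯ * Δ (r-1) ⊂ ℝ^d × ℝ^r`. -/
def cayley {d r : ℕ} (Δ : Fin r → Set (Fin d → ℝ)) : Set (Fin (d + r) → ℝ) :=
  convexHull ℝ (⋃ i, (fun x => cayleyPt x i) '' Δ i)

/-- `F` is a facet of `P`: a nonempty exposed face of dimension one less. -/
def IsFacetOf {n : ℕ} (F P : Set (Fin n → ℝ)) : Prop :=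
  IsExposed ℝ P F ∧ F.Nonempty ∧ polyDim F + 1 = polyDim P

/-- A special `(r-1)`-simplex of `P`: `r` affinely independent lattice points of `P`
such that every facet of `P` contains exactly `r - 1` of them. -/
def IsSpecialSimplex {n : ℕ} (P : Set (Fin n → ℝ)) (r : ℕ) (v : Fin r → Fin n → ℝ) : Prop :=
  (∀ i, IsLatticePt (v i) ∧ v i ∈ P) ∧ AffineIndependent ℝ v ∧
  ∀ F, IsFacetOf F P → ∃! i, v i ∉ F

/-- `∇_i = {y : ⟨x,y⟩ ≥ -δ_{ij} ∀ x ∈ Δ_j ∀ j}`, the polytopes of the dual nef-partition. -/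
def nefDual {d r : ℕ} (Δ : Fin r → Set (Fin d → ℝ)) (i : Fin r) : Set (Fin d → ℝ) :=
  {y | ∀ j, ∀ x ∈ Δ j, -(if i = j then (1 : ℝ) else 0) ≤ pairR x y}

/-- A centered nef-partition: lattice polytopes containing `0` whose Minkowski sum is a
reflexive polytope with `0` as its unique interior lattice point. -/
def IsCenteredNefPartition {d r : ℕ} (Δ : Fin r → Set (Fin d → ℝ)) : Prop :=
  (∀ i, IsLatticePoly (Δ i) ∧ (0 : Fin d → ℝ) ∈ Δ i) ∧
  IsReflexivePoly (minkSum Δ) ∧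
  ∀ x, IsLatticePt x → x ∈ interior (minkSum Δ) → x = 0

/-- Two centered nef-partitions dual to each other. -/
def AreDualNefPartitions {d r : ℕ} (Δ Nb : Fin r → Set (Fin d → ℝ)) : Prop :=
  IsCenteredNefPartition Δ ∧ IsCenteredNefPartition Nb ∧
  (∀ i, Nb i = nefDual Δ i) ∧ (∀ i, Δ i = nefDual Nb i)

/-- A Gorenstein cone with its distinguished lattice point `nσ`: a full-dimensional cone
generated by finitely many lattice points on the hyperplane `⟨·, nσ⟩ = 1`. -/
def IsGorensteinCone {n : ℕ} (σ : Set (Fin n → ℝ)) (nσ : Fin n → ℝ) : Prop :=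
  IsLatticePt nσ ∧ Submodule.span ℝ σ = ⊤ ∧
  ∃ V : Finset (Fin n → ℝ), V.Nonempty ∧
    (∀ v ∈ V, IsLatticePt v ∧ pairR v nσ = 1) ∧
    σ = {x | ∃ c : (Fin n → ℝ) → ℝ, (∀ v, 0 ≤ c v) ∧ x = ∑ v ∈ V, c v • v}

/-- The dual cone. -/
def dualCone {n : ℕ} (σ : Set (Fin n → ℝ)) : Set (Fin n → ℝ) :=
  {y | ∀ x ∈ σ, 0 ≤ pairR x y}

/-- Integrally closed lattice polytope: every lattice point of `k • P` is a sum of `k`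
lattice points of `P`. -/
def IntegrallyClosed {n : ℕ} (P : Set (Fin n → ℝ)) : Prop :=
  ∀ (k : ℕ) (x : Fin n → ℝ), IsLatticePt x → x ∈ (k : ℝ) • P →
    ∃ v : Fin k → (Fin n → ℝ), (∀ j, IsLatticePt (v j) ∧ v j ∈ P) ∧ x = ∑ j, v j




section PairAux
variable {n : ℕ}

lemma pairR_comm (x y : Fin n → ℝ) : pairR x y = pairR y x := by
  simp [pairR, mul_comm]

lemma pairR_add_left (x y z : Fin n → ℝ) : pairR (x + y) z = pairR x z + pairR y z := by
  simp [pairR, add_mul, Finset.sum_add_distrib]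

lemma pairR_smul_left (c : ℝ) (x z : Fin n → ℝ) : pairR (c • x) z = c * pairR x z := by
  simp [pairR, Finset.mul_sum, mul_assoc]

lemma pairR_neg_left (x z : Fin n → ℝ) : pairR (-x) z = -pairR x z := by
  simp [pairR]

lemma pairR_zero_left (z : Fin n → ℝ) : pairR 0 z = 0 := by simp [pairR]

lemma pairR_sum_left {ι : Type*} (s : Finset ι) (f : ι → (Fin n → ℝ)) (z : Fin n → ℝ) :
    pairR (∑ i ∈ s, f i) z = ∑ i ∈ s, pairR (f i) z := by
  classical
  induction s using Finset.induction_on with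
  | empty => simp [pairR]
  | insert _ _ h ih => rw [Finset.sum_insert h, pairR_add_left, ih, Finset.sum_insert h]

lemma pairR_sum_right {ι : Type*} (s : Finset ι) (f : ι → (Fin n → ℝ)) (z : Fin n → ℝ) :
    pairR z (∑ i ∈ s, f i) = ∑ i ∈ s, pairR z (f i) := by
  rw [pairR_comm, pairR_sum_left]
  exact Finset.sum_congr rfl fun i _ => pairR_comm _ _

lemma pairR_smul_right (c : ℝ) (x z : Fin n → ℝ) : pairR z (c • x) = c * pairR z x := by
  rw [pairR_comm, pairR_smul_left, pairR_comm]

lemma isLinearMap_pairR_left (v : Fin n → ℝ) : IsLinearMap ℝ (fun x : Fin n → ℝ => pairR x v) :=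
  ⟨fun x y => pairR_add_left x y v, fun c x => pairR_smul_left c x v⟩

lemma pairR_int {x y : Fin n → ℝ} (hx : IsLatticePt x) (hy : IsLatticePt y) :
    ∃ z : ℤ, pairR x y = (z : ℝ) := by
  choose a ha using hx
  choose b hb using hy
  refine ⟨∑ k, a k * b k, ?_⟩
  rw [pairR]
  push_cast
  exact Finset.sum_congr rfl fun k _ => by rw [ha, hb]

lemma hull_pair_ge {F : Finset (Fin n → ℝ)} {v : Fin n → ℝ} {c : ℝ}
    (h : ∀ u ∈ F, c ≤ pairR u v) :
    ∀ x ∈ convexHull ℝ (F : Set (Fin n → ℝ)), c ≤ pairR x v := by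
  have hconv : Convex ℝ {x : Fin n → ℝ | c ≤ pairR x v} :=
    convex_halfSpace_ge (isLinearMap_pairR_left v) c
  exact fun x hx => convexHull_min (fun u hu => h u hu) hconv hx

/-- the vector representing a continuous linear functional -/
def dvecOf (f : (Fin n → ℝ) →L[ℝ] ℝ) : Fin n → ℝ := fun k => f (Pi.single k 1)

lemma pairR_dvecOf (f : (Fin n → ℝ) →L[ℝ] ℝ) (z : Fin n → ℝ) :
    pairR z (dvecOf f) = f z := by
  have hz : z = ∑ k, z k • (Pi.single k (1:ℝ) : Fin n → ℝ) := by
    ext j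
    rw [Fintype.sum_apply]
    simp [Pi.single_apply]
  calc pairR z (dvecOf f) = ∑ k, z k * f (Pi.single k 1) := rfl
  _ = f (∑ k, z k • (Pi.single k (1:ℝ) : Fin n → ℝ)) := by rw [map_sum]; exact Finset.sum_congr rfl (by simp)
  _ = f z := by rw [← hz]

end PairAux


section ConeAux
variable {n : ℕ}

/-- conic combinations of a finite set -/
def coneOf (A : Finset (Fin n → ℝ)) : Set (Fin n → ℝ) :=
  {x | ∃ lam : (Fin n → ℝ) → ℝ, (∀ v, 0 ≤ lam v) ∧ x = ∑ v ∈ A, lam v • v}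

lemma zero_mem_coneOf (A : Finset (Fin n → ℝ)) : (0 : Fin n → ℝ) ∈ coneOf A :=
  ⟨0, fun _ => le_refl _, by simp⟩

lemma coneOf_mono {A B : Finset (Fin n → ℝ)} (h : A ⊆ B) : coneOf A ⊆ coneOf B := by
  classical
  rintro x ⟨lam, h0, rfl⟩
  refine ⟨fun v => if v ∈ A then lam v else 0, fun v => by dsimp only; split <;> simp [h0], ?_⟩
  rw [← Finset.sum_subset h (f := fun v => (if v ∈ A then lam v else 0) • v)
      (fun v _ hva => by simp [hva])]
  exact Finset.sum_congr rfl fun v hv => by simp [hv]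

lemma smul_mem_coneOf {A : Finset (Fin n → ℝ)} {v : Fin n → ℝ} (hv : v ∈ A) {t : ℝ}
    (ht : 0 ≤ t) : t • v ∈ coneOf A := by
  classical
  refine ⟨fun u => if u = v then t else 0, fun u => by dsimp only; split <;> simp [ht], ?_⟩
  rw [Finset.sum_eq_single v (fun u _ hu => by simp [hu]) (fun hvA => absurd hv hvA)]
  simp

lemma convex_coneOf (A : Finset (Fin n → ℝ)) : Convex ℝ (coneOf A) := by
  rintro x ⟨lam, hlam, rfl⟩ y ⟨mu, hmu, rfl⟩ a b ha hb _
  refine ⟨fun v => a * lam v + b * mu v, fun v => by have := hlam v; have := hmu v; positivity, ?_⟩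
  rw [Finset.smul_sum, Finset.smul_sum, ← Finset.sum_add_distrib]
  exact Finset.sum_congr rfl fun v _ => by
    rw [add_smul, smul_smul, smul_smul]

end ConeAux

section ConeAux2
variable {n : ℕ}

lemma cone_caratheodory (A : Finset (Fin n → ℝ)) :
    ∀ x ∈ coneOf A, ∃ B, B ⊆ A ∧
      LinearIndependent ℝ (fun v : {y // y ∈ B} => (v : Fin n → ℝ)) ∧ x ∈ coneOf B := by
  classical
  induction A using Finset.strongInduction with
  | _ A ih =>
    intro x hx
    by_cases hli : LinearIndependent ℝ (fun v : {y // y ∈ A} => (v : Fin n → ℝ))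
    · exact ⟨A, Finset.Subset.refl A, hli, hx⟩
    · obtain ⟨lam, hlam0, rfl⟩ := hx
      rw [Fintype.not_linearIndependent_iff] at hli
      obtain ⟨g, hgsum, i₀, hgi₀⟩ := hli
      have red : ∀ c : (Fin n → ℝ) → ℝ, (∑ v ∈ A, c v • v = 0) → (∃ w ∈ A, 0 < c w) →
          ∃ B, B ⊆ A ∧ LinearIndependent ℝ (fun v : {y // y ∈ B} => (v : Fin n → ℝ)) ∧
            (∑ v ∈ A, lam v • v) ∈ coneOf B := by
        intro c hc0 ⟨w, hwA, hwpos⟩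
        set P := A.filter (fun v => 0 < c v) with hP
        have hPne : P.Nonempty := ⟨w, Finset.mem_filter.2 ⟨hwA, hwpos⟩⟩
        set t := P.inf' hPne (fun v => lam v / c v) with htdef
        obtain ⟨vs, hvsP, hvseq⟩ := Finset.exists_mem_eq_inf' hPne (fun v => lam v / c v)
        have hvsA : vs ∈ A := (Finset.mem_filter.1 hvsP).1
        have hvsc : 0 < c vs := (Finset.mem_filter.1 hvsP).2
        have ht0 : 0 ≤ t := by
          rw [htdef, hvseq]; exact div_nonneg (hlam0 vs) hvsc.le
        set lam' : (Fin n → ℝ) → ℝ := fun v => lam v - t * c v with hlam'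
        have hlam'0 : ∀ v ∈ A, 0 ≤ lam' v := by
          intro v hvA
          by_cases hcv : 0 < c v
          · have hvP : v ∈ P := Finset.mem_filter.2 ⟨hvA, hcv⟩
            have : t ≤ lam v / c v := Finset.inf'_le _ hvP
            have := (le_div_iff₀ hcv).1 this
            simp only [hlam']; linarith
          · push_neg at hcv
            have : t * c v ≤ 0 := mul_nonpos_of_nonneg_of_nonpos ht0 hcv
            simp only [hlam']; linarith [hlam0 v]
        have hvs0 : lam' vs = 0 := by
          simp only [hlam', htdef, hvseq]
          field_simp; ring
        have hsum' : ∑ v ∈ A, lam' v • v = ∑ v ∈ A, lam v • v := by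
          simp only [hlam', sub_smul, Finset.sum_sub_distrib, mul_smul]
          rw [← Finset.smul_sum, hc0, smul_zero, sub_zero]
        have hxmem : (∑ v ∈ A, lam v • v) ∈ coneOf (A.erase vs) := by
          refine ⟨fun v => if v ∈ A.erase vs then lam' v else 0, ?_, ?_⟩
          · intro v; dsimp only; split
            · exact hlam'0 v (Finset.mem_of_mem_erase ‹_›)
            · exact le_refl 0
          · rw [← hsum', ← Finset.add_sum_erase A _ hvsA, hvs0, zero_smul, zero_add]
            exact (Finset.sum_congr rfl fun v hv => by simp [hv]).symm
        obtain ⟨B, hBsub, hBli, hBx⟩ := ih (A.erase vs) (Finset.erase_ssubset hvsA) _ hxmem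
        exact ⟨B, hBsub.trans (Finset.erase_subset _ _), hBli, hBx⟩
      set c : (Fin n → ℝ) → ℝ := fun v => if h : v ∈ A then g ⟨v, h⟩ else 0 with hc
      have hcsum : ∑ v ∈ A, c v • v = 0 := by
        rw [← hgsum, ← Finset.sum_attach A (fun v => c v • v)]
        rw [Finset.univ_eq_attach]
        exact Finset.sum_congr rfl fun i _ => by simp [hc, i.2]
      have hderive : (∃ w ∈ A, 0 < c w) ∨ (∃ w ∈ A, 0 < -c w) := by
        have hne : c i₀ ≠ 0 := by simpa [hc, i₀.2] using hgi₀
        rcases lt_or_gt_of_ne hne with hlt | hgt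
        · exact Or.inr ⟨i₀, i₀.2, by linarith⟩
        · exact Or.inl ⟨i₀, i₀.2, hgt⟩
      rcases hderive with hpos | hpos
      · exact red c hcsum hpos
      · exact red (-c) (by simpa using congrArg Neg.neg hcsum) hpos

/-- combination map -/
def comboMap (B : Finset (Fin n → ℝ)) : (({y // y ∈ B} → ℝ) →ₗ[ℝ] (Fin n → ℝ)) where
  toFun μ := ∑ i : {y // y ∈ B}, μ i • (i : Fin n → ℝ)
  map_add' μ ν := by simp [add_smul, Finset.sum_add_distrib]
  map_smul' c μ := by simp [Finset.smul_sum, smul_smul]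

lemma coneOf_eq_image (B : Finset (Fin n → ℝ)) :
    coneOf B = (comboMap B) '' {μ | ∀ i, 0 ≤ μ i} := by
  classical
  ext x
  constructor
  · rintro ⟨lam, hlam0, rfl⟩
    refine ⟨fun i => lam i, fun i => hlam0 i, ?_⟩
    show ∑ i : {y // y ∈ B}, lam (i : Fin n → ℝ) • (i : Fin n → ℝ) = _
    rw [Finset.univ_eq_attach, Finset.sum_attach B (fun v => lam v • v)]
  · rintro ⟨μ, hμ0, rfl⟩
    refine ⟨fun v => if h : v ∈ B then μ ⟨v, h⟩ else 0, ?_, ?_⟩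
    · intro v; dsimp only; split
      · exact hμ0 _
      · exact le_refl 0
    · show _ = ∑ v ∈ B, (if h : v ∈ B then μ ⟨v, h⟩ else 0) • v
      rw [← Finset.sum_attach B (fun v => (if h : v ∈ B then μ ⟨v, h⟩ else 0) • v)]
      show ∑ i : {y // y ∈ B}, μ i • (i : Fin n → ℝ) = _
      rw [Finset.univ_eq_attach]
      exact Finset.sum_congr rfl fun i _ => by simp [i.2]

lemma isClosed_coneOf_of_li (B : Finset (Fin n → ℝ))
    (hli : LinearIndependent ℝ (fun v : {y // y ∈ B} => (v : Fin n → ℝ))) :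
    IsClosed (coneOf B) := by
  rw [coneOf_eq_image]
  have hinj : Function.Injective (comboMap B) := by
    intro μ ν hμν
    have h0 : comboMap B (μ - ν) = 0 := by rw [map_sub, hμν, sub_self]
    have := Fintype.linearIndependent_iff.1 hli (μ - ν) h0
    funext i
    have := this i
    simpa [sub_eq_zero] using this
  obtain ⟨K, -, hanti⟩ := (comboMap B).injective_iff_antilipschitz.1 hinj
  have hcont : UniformContinuous (comboMap B) :=
    (LinearMap.toContinuousLinearMap (comboMap B)).uniformContinuous
  have hemb := hanti.isClosedEmbedding hcont
  have hset : IsClosed {μ : {y // y ∈ B} → ℝ | ∀ i, 0 ≤ μ i} := by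
    have : {μ : {y // y ∈ B} → ℝ | ∀ i, 0 ≤ μ i} = ⋂ i, {μ | 0 ≤ μ i} := by
      ext μ; simp
    rw [this]
    exact isClosed_iInter fun i => isClosed_le continuous_const (continuous_apply i)
  exact hemb.isClosedMap _ hset

lemma isClosed_coneOf (A : Finset (Fin n → ℝ)) : IsClosed (coneOf A) := by
  classical
  have hrep : coneOf A = ⋃ B ∈ {B : Finset (Fin n → ℝ) |
      B ⊆ A ∧ LinearIndependent ℝ (fun v : {y // y ∈ B} => (v : Fin n → ℝ))}, coneOf B := by
    ext x
    simp only [Set.mem_iUnion, Set.mem_setOf_eq]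
    constructor
    · intro hx
      obtain ⟨B, hBA, hBli, hBx⟩ := cone_caratheodory A x hx
      exact ⟨B, ⟨hBA, hBli⟩, hBx⟩
    · rintro ⟨B, ⟨hBA, -⟩, hBx⟩
      exact coneOf_mono hBA hBx
  rw [hrep]
  refine Set.Finite.isClosed_biUnion ?_ ?_
  · exact Set.Finite.subset (Finset.finite_toSet A.powerset)
      (fun B hB => by simpa using hB.1)
  · rintro B ⟨-, hBli⟩
    exact isClosed_coneOf_of_li B hBli

lemma farkas (A : Finset (Fin n → ℝ)) (y : Fin n → ℝ)
    (hy : ∀ dv : Fin n → ℝ, (∀ v ∈ A, 0 ≤ pairR v dv) → 0 ≤ pairR y dv) :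
    y ∈ coneOf A := by
  by_contra hnot
  obtain ⟨f, u, hfS, hfy⟩ :=
    geometric_hahn_banach_closed_point (convex_coneOf A) (isClosed_coneOf A) hnot
  have hu0 : 0 < u := by simpa using hfS 0 (zero_mem_coneOf A)
  have hfv : ∀ v ∈ A, f v ≤ 0 := by
    intro v hv
    by_contra hpos
    push_neg at hpos
    have ht : (0:ℝ) ≤ (u + 1) / f v := by positivity
    have := hfS _ (smul_mem_coneOf hv ht)
    rw [map_smul] at this
    simp only [smul_eq_mul] at this
    rw [div_mul_cancel₀ _ (ne_of_gt hpos)] at this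
    linarith
  have hdv : ∀ v ∈ A, 0 ≤ pairR v (-(dvecOf f)) := by
    intro v hv
    rw [pairR_comm, pairR_neg_left, pairR_comm, pairR_dvecOf]
    linarith [hfv v hv]
  have := hy _ hdv
  rw [pairR_comm, pairR_neg_left, pairR_comm, pairR_dvecOf] at this
  linarith

end ConeAux2

section IntrAux
variable {n : ℕ}

lemma affineSpan_coe_eq_span {C : Set (Fin n → ℝ)} (hC0 : (0 : Fin n → ℝ) ∈ C) :
    (affineSpan ℝ C : Set (Fin n → ℝ)) = (Submodule.span ℝ C : Set (Fin n → ℝ)) := by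
  apply subset_antisymm
  · have h1 : affineSpan ℝ C ≤ (Submodule.span ℝ C).toAffineSubspace := by
      apply affineSpan_le.2
      intro x hx
      exact (Submodule.mem_toAffineSubspace).2 (Submodule.subset_span hx)
    intro x hx
    exact (Submodule.mem_toAffineSubspace).1 (h1 hx)
  · intro x hx
    induction hx using Submodule.span_induction with
    | mem y hy => exact subset_affineSpan ℝ C hy
    | zero => exact subset_affineSpan ℝ C hC0
    | add y z hy hz hy' hz' =>
      have := AffineSubspace.smul_vsub_vadd_mem (affineSpan ℝ C) (1:ℝ) hy'
        (subset_affineSpan ℝ C hC0) hz'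
      simpa using this
    | smul c y hy hy' =>
      have := AffineSubspace.smul_vsub_vadd_mem (affineSpan ℝ C) c hy'
        (subset_affineSpan ℝ C hC0) (subset_affineSpan ℝ C hC0)
      simpa using this

lemma absorb_of_mem_intrinsicInterior {C : Set (Fin n → ℝ)} (hC0 : (0 : Fin n → ℝ) ∈ C)
    (hmem : (0 : Fin n → ℝ) ∈ intrinsicInterior ℝ C) :
    ∀ x ∈ C, ∃ δ : ℝ, 0 < δ ∧ (-δ) • x ∈ C := by
  intro x hx
  rw [intrinsicInterior, Set.mem_image] at hmem
  obtain ⟨p, hp, hp0⟩ := hmem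
  have hxspan : ∀ t : ℝ, t • x ∈ (affineSpan ℝ C : Set (Fin n → ℝ)) := by
    intro t
    rw [affineSpan_coe_eq_span hC0]
    exact Submodule.smul_mem _ t (Submodule.subset_span hx)
  set g : ℝ → (affineSpan ℝ C : Set (Fin n → ℝ)) := fun t => ⟨t • x, hxspan t⟩ with hg
  have hgcont : Continuous g := by
    apply Continuous.subtype_mk
    exact continuous_id.smul continuous_const
  have hg0 : g 0 = p := by
    apply Subtype.ext
    simp [hg, hp0]
  have hopen : IsOpen (g ⁻¹' interior (Subtype.val ⁻¹' C)) :=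
    isOpen_interior.preimage hgcont
  have h0mem : (0:ℝ) ∈ g ⁻¹' interior (Subtype.val ⁻¹' C) := by
    simp only [Set.mem_preimage, hg0]
    exact hp
  obtain ⟨ε, hε, hball⟩ := Metric.isOpen_iff.1 hopen 0 h0mem
  refine ⟨ε/2, by positivity, ?_⟩
  have : (-(ε/2)) ∈ Metric.ball (0:ℝ) ε := by
    simp only [Metric.mem_ball, dist_zero_right, Real.norm_eq_abs]
    rw [abs_neg, abs_of_pos (by positivity)]
    linarith
  have := hball this
  simp only [Set.mem_preimage] at this
  have := interior_subset this
  simpa [hg] using this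

lemma span_convexHull_eq (s : Set (Fin n → ℝ)) :
    Submodule.span ℝ (convexHull ℝ s) = Submodule.span ℝ s := by
  apply le_antisymm
  · apply Submodule.span_le.2
    exact convexHull_min Submodule.subset_span (Submodule.span ℝ s).convex
  · exact Submodule.span_mono (subset_convexHull ℝ s)

set_option maxHeartbeats 1000000 in
lemma relint_of_pos_combo (F : Finset (Fin n → ℝ)) (hF : F.Nonempty)
    (μ : (Fin n → ℝ) → ℝ) (hpos : ∀ u ∈ F, 0 < μ u) (hsum1 : ∑ u ∈ F, μ u = 1)
    (hcombo : ∑ u ∈ F, μ u • u = 0) :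
    (0 : Fin n → ℝ) ∈ intrinsicInterior ℝ (convexHull ℝ (F : Set (Fin n → ℝ))) := by
  classical
  set C := convexHull ℝ (F : Set (Fin n → ℝ)) with hCdef
  have hC0 : (0 : Fin n → ℝ) ∈ C := by
    have hmem := Finset.centerMass_mem_convexHull F (fun u hu => (hpos u hu).le)
      (by rw [hsum1]; norm_num) (fun u hu => Finset.mem_coe.2 hu)
    rw [Finset.centerMass_eq_of_sum_1 _ _ hsum1] at hmem
    simpa [hcombo] using hmem
  set W := Submodule.span ℝ (F : Set (Fin n → ℝ)) with hWdef
  set T' : ({y // y ∈ F} → ℝ) →ₗ[ℝ] W :=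
    (comboMap F).codRestrict W (fun ν => Submodule.sum_mem _
      (fun i _ => Submodule.smul_mem _ _ (Submodule.subset_span i.2))) with hT'
  have hT'surj : LinearMap.range T' = ⊤ := by
    rw [LinearMap.range_eq_top]
    intro w
    have hw : (w : Fin n → ℝ) ∈ Submodule.span ℝ (F : Set (Fin n → ℝ)) := w.2
    rw [Submodule.mem_span_finset] at hw
    obtain ⟨f, -, hf⟩ := hw
    refine ⟨fun i => f i, ?_⟩
    apply Subtype.ext
    show comboMap F (fun i => f i) = (w : Fin n → ℝ)
    show ∑ i : {y // y ∈ F}, f (i : Fin n → ℝ) • (i : Fin n → ℝ) = _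
    rw [Finset.univ_eq_attach, Finset.sum_attach F (fun v => f v • v), hf]
  obtain ⟨σ, hσ⟩ := T'.exists_rightInverse_of_surjective hT'surj
  have hσcont : Continuous σ := σ.continuous_of_finiteDimensional
  set δ := F.inf' hF μ with hδdef
  have hδ : 0 < δ := by
    rw [hδdef]
    exact (Finset.lt_inf'_iff hF).2 (fun u hu => hpos u hu)
  set sfun : W → ℝ := fun w => ∑ i : {y // y ∈ F}, σ w i with hsfun
  have hscont : Continuous sfun := by
    apply continuous_finset_sum
    intro i _
    exact (continuous_apply i).comp hσcont
  set O : Set W := (⋂ i : {y // y ∈ F}, {w : W | |σ w i| < δ/2}) ∩ {w : W | |sfun w| < 1/2}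
    with hO
  have hOopen : IsOpen O := by
    apply IsOpen.inter
    · apply isOpen_iInter_of_finite
      intro i
      exact isOpen_lt (continuous_abs.comp ((continuous_apply i).comp hσcont)) continuous_const
    · exact isOpen_lt (continuous_abs.comp hscont) continuous_const
  have h0O : (0 : W) ∈ O := by
    constructor
    · refine Set.mem_iInter.2 fun i => ?_
      simp [map_zero σ]
      positivity
    · simp only [Set.mem_setOf_eq, hsfun, map_zero σ]
      simp
  obtain ⟨ε, hε, hball⟩ := Metric.isOpen_iff.1 hOopen 0 h0O
  -- key: small points of W are in C
  have key : ∀ q : Fin n → ℝ, q ∈ W → ‖q‖ < ε → q ∈ C := by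
    intro q hqW hqnorm
    set w : W := ⟨q, hqW⟩ with hw
    have hwO : w ∈ O := by
      apply hball
      rw [Metric.mem_ball, dist_zero_right]
      exact hqnorm
    obtain ⟨h1, h2⟩ := hwO
    rw [Set.mem_iInter] at h1
    simp only [Set.mem_setOf_eq] at h1 h2
    set c : (Fin n → ℝ) → ℝ :=
      fun u => if h : u ∈ F then μ u * (1 - sfun w) + σ w ⟨u, h⟩ else 0 with hc
    have hsw : 1 - sfun w > 1/2 := by
      have := abs_lt.1 h2
      linarith [this.1, this.2]
    have hcpos : ∀ u ∈ F, 0 < c u := by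
      intro u hu
      have hμδ : δ ≤ μ u := Finset.inf'_le _ hu
      have hσb := abs_lt.1 (h1 ⟨u, hu⟩)
      simp only [hc, dif_pos hu]
      nlinarith [hσb.1, hσb.2]
    have hcsum : ∑ u ∈ F, c u = 1 := by
      rw [← Finset.sum_attach F c]
      have : ∀ u : {y // y ∈ F}, c ↑u = μ ↑u * (1 - sfun w) + σ w u := by
        intro u; simp [hc, u.2]
      rw [Finset.sum_congr rfl (fun u _ => this u)]
      rw [Finset.sum_add_distrib, ← Finset.sum_mul, Finset.sum_attach F μ, hsum1]
      have : ∑ u ∈ F.attach, σ w u = sfun w := by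
        rw [hsfun, Finset.univ_eq_attach]
      rw [this]
      ring
    have hccombo : ∑ u ∈ F, c u • u = q := by
      rw [← Finset.sum_attach F (fun u => c u • u)]
      have : ∀ u : {y // y ∈ F}, c ↑u • (u : Fin n → ℝ) =
          (μ ↑u * (1 - sfun w)) • (u : Fin n → ℝ) + σ w u • (u : Fin n → ℝ) := by
        intro u
        rw [← add_smul]
        congr 1
        simp [hc, u.2]
      rw [Finset.sum_congr rfl (fun u _ => this u), Finset.sum_add_distrib]
      have e1 : ∑ u ∈ F.attach, (μ ↑u * (1 - sfun w)) • (u : Fin n → ℝ)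
          = (1 - sfun w) • ∑ u ∈ F.attach, μ ↑u • (u : Fin n → ℝ) := by
        rw [Finset.smul_sum]
        exact Finset.sum_congr rfl fun u _ => by rw [smul_smul, mul_comm]
      have e2 : ∑ u ∈ F.attach, μ ↑u • (u : Fin n → ℝ) = 0 := by
        rw [Finset.sum_attach F (fun u => μ u • u), hcombo]
      have e3 : ∑ u ∈ F.attach, σ w u • (u : Fin n → ℝ) = comboMap F (σ w) := by
        show _ = ∑ i : {y // y ∈ F}, σ w i • (i : Fin n → ℝ)
        rw [Finset.univ_eq_attach]
      rw [e1, e2, e3, smul_zero, zero_add]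
      have : T' (σ w) = w := by
        have := congrArg (fun (f : W →ₗ[ℝ] W) => f w) hσ
        simpa using this
      have hcoe : (comboMap F) (σ w) = ((T' (σ w) : W) : Fin n → ℝ) := rfl
      rw [hcoe, this]
    have hmem := Finset.centerMass_mem_convexHull F (fun u hu => (hcpos u hu).le)
      (by rw [hcsum]; norm_num) (fun u hu => Finset.mem_coe.2 hu)
    rw [Finset.centerMass_eq_of_sum_1 _ _ hcsum] at hmem
    simpa [hccombo] using hmem
  -- conclude
  have h0A : (0 : Fin n → ℝ) ∈ affineSpan ℝ C := subset_affineSpan ℝ C hC0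
  have hcarrier : (affineSpan ℝ C : Set (Fin n → ℝ)) = (W : Set (Fin n → ℝ)) := by
    rw [affineSpan_coe_eq_span hC0, hCdef, hWdef, span_convexHull_eq]
  rw [intrinsicInterior, Set.mem_image]
  refine ⟨⟨0, h0A⟩, ?_, rfl⟩
  have hsub : (Subtype.val ⁻¹' (Metric.ball 0 ε) :
      Set (affineSpan ℝ C : Set (Fin n → ℝ))) ⊆ Subtype.val ⁻¹' C := by
    intro q hq
    simp only [Set.mem_preimage, Metric.mem_ball, dist_zero_right] at hq ⊢
    have hqW : (q : Fin n → ℝ) ∈ W := by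
      have hq2 : (q : Fin n → ℝ) ∈ (affineSpan ℝ C : Set (Fin n → ℝ)) := q.2
      exact SetLike.mem_coe.1 ((Set.ext_iff.1 hcarrier _).1 hq2)
    exact key _ hqW hq
  have hUopen : IsOpen (Subtype.val ⁻¹' (Metric.ball 0 ε) :
      Set (affineSpan ℝ C : Set (Fin n → ℝ))) :=
    Metric.isOpen_ball.preimage continuous_subtype_val
  have hpU : (⟨0, h0A⟩ : (affineSpan ℝ C : Set (Fin n → ℝ))) ∈
      (Subtype.val ⁻¹' (Metric.ball 0 ε) : Set (affineSpan ℝ C : Set (Fin n → ℝ))) := by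
    simp only [Set.mem_preimage, Metric.mem_ball, dist_zero_right]
    simpa using hε
  exact interior_maximal hsub hUopen hpU

end IntrAux

section MinkAux
variable {n r : ℕ}

lemma minkSum_eq_univ (Δ : Fin r → Set (Fin n → ℝ)) :
    minkSum Δ = minkSumOver Finset.univ Δ := by
  ext x
  constructor
  · rintro ⟨f, hf, rfl⟩; exact ⟨f, fun i _ => hf i, rfl⟩
  · rintro ⟨f, hf, rfl⟩; exact ⟨f, fun i => hf i (Finset.mem_univ i), rfl⟩

lemma zero_mem_minkSumOver {Δ : Fin r → Set (Fin n → ℝ)} (h0 : ∀ i, (0:Fin n → ℝ) ∈ Δ i)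
    (K : Finset (Fin r)) : (0 : Fin n → ℝ) ∈ minkSumOver K Δ :=
  ⟨0, fun i _ => h0 i, by simp⟩

lemma single_mem_minkSumOver {Δ : Fin r → Set (Fin n → ℝ)} (h0 : ∀ i, (0:Fin n → ℝ) ∈ Δ i)
    {K : Finset (Fin r)} {i : Fin r} (hi : i ∈ K) {x : Fin n → ℝ} (hx : x ∈ Δ i) :
    x ∈ minkSumOver K Δ := by
  classical
  refine ⟨fun j => if j = i then x else 0, ?_, ?_⟩
  · intro j _; dsimp only; split
    · subst ‹j = i›; exact hx
    · exact h0 j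
  · rw [Finset.sum_ite_eq' K i (fun _ => x)]
    simp [hi]

lemma minkSumOver_empty (Δ : Fin r → Set (Fin n → ℝ)) :
    minkSumOver (∅ : Finset (Fin r)) Δ = {(0 : Fin n → ℝ)} := by
  ext x
  simp only [minkSumOver, Set.mem_setOf_eq, Finset.notMem_empty, Finset.sum_empty,
    Set.mem_singleton_iff]
  constructor
  · rintro ⟨f, -, rfl⟩; rfl
  · rintro rfl; exact ⟨0, by simp, rfl⟩

lemma minkSumOver_insert (Δ : Fin r → Set (Fin n → ℝ)) {a : Fin r} {K : Finset (Fin r)}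
    (ha : a ∉ K) : minkSumOver (insert a K) Δ = Δ a + minkSumOver K Δ := by
  classical
  ext x
  constructor
  · rintro ⟨f, hf, rfl⟩
    refine ⟨f a, hf a (Finset.mem_insert_self a K), ∑ i ∈ K, f i,
      ⟨f, fun i hi => hf i (Finset.mem_insert_of_mem hi), rfl⟩, ?_⟩
    rw [Finset.sum_insert ha]
  · rintro ⟨u, hu, v, ⟨g, hg, rfl⟩, rfl⟩
    refine ⟨fun i => if i = a then u else g i, ?_, ?_⟩
    · intro i hi
      rcases Finset.mem_insert.1 hi with rfl | hiK
      · simp [hu]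
      · have : i ≠ a := fun h => ha (h ▸ hiK)
        simp [this, hg i hiK]
    · rw [Finset.sum_insert ha]
      simp only [if_pos rfl]
      congr 1
      exact (Finset.sum_congr rfl fun i hi => by
        have : i ≠ a := fun h => ha (h ▸ hi)
        simp [this]).symm

/-- vertex set of a partial Minkowski sum -/
def BF {n r : ℕ} (K : Finset (Fin r)) (V : Fin r → Finset (Fin n → ℝ)) : Finset (Fin n → ℝ) :=
  (Fintype.piFinset V).image (fun f => ∑ i ∈ K, f i)

lemma BF_nonempty {K : Finset (Fin r)} {V : Fin r → Finset (Fin n → ℝ)}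
    (hV : ∀ i, (V i).Nonempty) : (BF K V).Nonempty := by
  apply Finset.image_nonempty.2
  exact Fintype.piFinset_nonempty.2 hV

lemma mem_BF {K : Finset (Fin r)} {V : Fin r → Finset (Fin n → ℝ)} {x : Fin n → ℝ}
    (hx : x ∈ BF K V) : ∃ f : Fin r → (Fin n → ℝ), (∀ i, f i ∈ V i) ∧ x = ∑ i ∈ K, f i := by
  obtain ⟨f, hf, rfl⟩ := Finset.mem_image.1 hx
  exact ⟨f, fun i => Fintype.mem_piFinset.1 hf i, rfl⟩

lemma BF_insert {V : Fin r → Finset (Fin n → ℝ)} (hV : ∀ i, (V i).Nonempty) {a : Fin r}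
    {K : Finset (Fin r)} (ha : a ∉ K) :
    ((BF (insert a K) V : Finset (Fin n → ℝ)) : Set (Fin n → ℝ)) =
      ((V a : Finset (Fin n → ℝ)) : Set (Fin n → ℝ)) + ((BF K V : Finset (Fin n → ℝ)) : Set (Fin n → ℝ)) := by
  classical
  ext x
  constructor
  · intro hx
    obtain ⟨f, hf, rfl⟩ := mem_BF (Finset.mem_coe.1 hx)
    refine ⟨f a, hf a, ∑ i ∈ K, f i, ?_, ?_⟩
    · exact Finset.mem_coe.2 (Finset.mem_image.2 ⟨f, Fintype.mem_piFinset.2 hf, rfl⟩)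
    · rw [Finset.sum_insert ha]
  · rintro ⟨u, hu, v, hv, rfl⟩
    obtain ⟨g, hg, rfl⟩ := mem_BF (Finset.mem_coe.1 hv)
    apply Finset.mem_coe.2
    apply Finset.mem_image.2
    refine ⟨fun i => if i = a then u else g i, ?_, ?_⟩
    · apply Fintype.mem_piFinset.2
      intro i
      by_cases hia : i = a
      · subst hia; simpa using hu
      · simpa [hia] using hg i
    · rw [Finset.sum_insert ha]
      simp only [if_pos rfl]
      congr 1
      exact Finset.sum_congr rfl fun i hi => by
        have : i ≠ a := fun h => ha (h ▸ hi)
        simp [this]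

lemma minkSumOver_eq_hull {Δ : Fin r → Set (Fin n → ℝ)} {V : Fin r → Finset (Fin n → ℝ)}
    (hV : ∀ i, (V i).Nonempty) (hVeq : ∀ i, Δ i = convexHull ℝ ((V i : Finset (Fin n → ℝ)) : Set (Fin n → ℝ)))
    (K : Finset (Fin r)) :
    minkSumOver K Δ = convexHull ℝ ((BF K V : Finset (Fin n → ℝ)) : Set (Fin n → ℝ)) := by
  classical
  induction K using Finset.induction_on with
  | empty =>
    rw [minkSumOver_empty]
    have : ((BF (∅ : Finset (Fin r)) V : Finset (Fin n → ℝ)) : Set (Fin n → ℝ)) = {0} := by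
      ext x
      simp only [BF, Finset.sum_empty, Finset.coe_image, Set.mem_image, Finset.mem_coe,
        Set.mem_singleton_iff]
      constructor
      · rintro ⟨f, -, rfl⟩; rfl
      · rintro rfl
        obtain ⟨f, hf⟩ := Fintype.piFinset_nonempty.2 hV
        exact ⟨f, hf, rfl⟩
    rw [this, convexHull_singleton]
  | insert _ _ ha ih =>
    rename_i a K
    rw [minkSumOver_insert Δ ha, BF_insert hV ha, convexHull_add, ← ih, hVeq a]
end MinkAux


section BipolarAux
variable {n : ℕ}

lemma isLinearMap_pairR_right (x : Fin n → ℝ) :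
    IsLinearMap ℝ (fun y : Fin n → ℝ => pairR x y) := by
  constructor
  · intro a b
    rw [pairR_comm, pairR_add_left, pairR_comm a, pairR_comm b]
  · intro c a
    rw [smul_eq_mul, pairR_comm, pairR_smul_left, pairR_comm]

lemma hull_pair_ge_right {F : Finset (Fin n → ℝ)} {x : Fin n → ℝ} {c : ℝ}
    (h : ∀ v ∈ F, c ≤ pairR x v) :
    ∀ y ∈ convexHull ℝ (F : Set (Fin n → ℝ)), c ≤ pairR x y := by
  have hconv : Convex ℝ {y : Fin n → ℝ | c ≤ pairR x y} :=
    convex_halfSpace_ge (isLinearMap_pairR_right x) c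
  exact fun y hy => convexHull_min (fun v hv => h v hv) hconv hy

lemma bipolar_mem {P : Set (Fin n → ℝ)} (hconv : Convex ℝ P) (hclosed : IsClosed P)
    (hP0 : (0 : Fin n → ℝ) ∈ P) {Vd : Finset (Fin n → ℝ)}
    (hVdeq : dualPoly P = convexHull ℝ ((Vd : Finset (Fin n → ℝ)) : Set (Fin n → ℝ)))
    {x : Fin n → ℝ} (hx : ∀ v ∈ Vd, -1 ≤ pairR x v) : x ∈ P := by
  by_contra hnx
  obtain ⟨f, u, hfu, hall⟩ := geometric_hahn_banach_point_closed hconv hclosed hnx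
  have hu0 : u < 0 := by simpa using hall 0 hP0
  set w : Fin n → ℝ := (-1/u) • (dvecOf f) with hw
  have hwval : ∀ z : Fin n → ℝ, pairR z w = (-1/u) * f z := by
    intro z
    rw [hw, pairR_smul_right, pairR_dvecOf]
  have hcoef : 0 < (-1/u) := by
    apply div_pos_of_neg_of_neg <;> linarith
  have hwdual : w ∈ dualPoly P := by
    intro z hz
    rw [hwval]
    have := hall z hz
    calc (-1:ℝ) = (-1/u) * u := (div_mul_cancel₀ (-1:ℝ) (ne_of_lt hu0)).symm
    _ ≤ (-1/u) * f z := mul_le_mul_of_nonneg_left (le_of_lt this) hcoef.le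
  rw [hVdeq] at hwdual
  have := hull_pair_ge_right hx w hwdual
  rw [hwval] at this
  have : (-1/u) * f x < (-1/u) * u := by
    apply mul_lt_mul_of_pos_left hfu hcoef
  have heq : (-1/u) * u = -1 := div_mul_cancel₀ (-1:ℝ) (ne_of_lt hu0)
  linarith [hull_pair_ge_right hx w hwdual, hwval x]

end BipolarAux

section CoreLemma

lemma nef_core {d r : ℕ} (Δ : Fin r → Set (Fin d → ℝ))
    (h : IsCenteredNefPartition Δ)
    (I I' J : Finset (Fin r)) (hJ : J = I ∩ I') (hJne : J.Nonempty)
    (hI0 : (0 : Fin d → ℝ) ∈ intrinsicInterior ℝ (minkSumOver I Δ))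
    (hI'0 : (0 : Fin d → ℝ) ∈ intrinsicInterior ℝ (minkSumOver I' Δ)) :
    (0 : Fin d → ℝ) ∈ intrinsicInterior ℝ (minkSumOver J Δ) := by
  classical
  obtain ⟨hΔpoly, hrefl, -⟩ := h
  choose V hVne hVlat hVeq using fun i => (hΔpoly i).1
  have h0Δ : ∀ i, (0 : Fin d → ℝ) ∈ Δ i := fun i => (hΔpoly i).2
  obtain ⟨-, h0int, hdualpoly⟩ := hrefl
  obtain ⟨Vd, hVdne, hVdlat, hVdeq⟩ := hdualpoly
  have hJI : J ⊆ I := hJ ▸ Finset.inter_subset_left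
  have hJI' : J ⊆ I' := hJ ▸ Finset.inter_subset_right
  -- support minima
  set m : Fin r → (Fin d → ℝ) → ℝ := fun i y => (V i).inf' (hVne i) (fun u => pairR u y)
    with hm
  have m_le : ∀ i y, ∀ x ∈ Δ i, m i y ≤ pairR x y := by
    intro i y x hx
    rw [hVeq i] at hx
    exact hull_pair_ge (fun u hu => Finset.inf'_le _ hu) x hx
  have m_attain : ∀ i y, ∃ u ∈ V i, m i y = pairR u y :=
    fun i y => Finset.exists_mem_eq_inf' (hVne i) _
  have m_nonpos : ∀ i y, m i y ≤ 0 := fun i y => by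
    simpa [pairR_zero_left] using m_le i y 0 (h0Δ i)
  have m_int : ∀ (i) (v : Fin d → ℝ), IsLatticePt v → ∃ z : ℤ, m i v = (z : ℝ) := by
    intro i v hv
    obtain ⟨u, hu, he⟩ := m_attain i v
    obtain ⟨z, hz⟩ := pairR_int (hVlat i u hu) hv
    exact ⟨z, by rw [he, hz]⟩
  -- the full Minkowski sum
  have hfull : minkSum Δ =
      convexHull ℝ ((BF Finset.univ V : Finset (Fin d → ℝ)) : Set (Fin d → ℝ)) := by
    rw [minkSum_eq_univ, minkSumOver_eq_hull hVne hVeq]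
  have hfullconv : Convex ℝ (minkSum Δ) := hfull ▸ convex_convexHull ℝ _
  have hfullclosed : IsClosed (minkSum Δ) :=
    hfull ▸ ((Set.Finite.isCompact_convexHull (𝕜 := ℝ) (Finset.finite_toSet _)).isClosed)
  have h0full : (0 : Fin d → ℝ) ∈ minkSum Δ :=
    (minkSum_eq_univ Δ) ▸ zero_mem_minkSumOver h0Δ Finset.univ
  have hsum_m_ge : ∀ v ∈ Vd, (-1 : ℝ) ≤ ∑ i, m i v := by
    intro v hv
    choose u hu hue using fun i => m_attain i v
    have hx : (∑ i, u i) ∈ minkSum Δ :=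
      ⟨u, fun i => (hVeq i) ▸ subset_convexHull ℝ _ (hu i), rfl⟩
    have hvd : v ∈ dualPoly (minkSum Δ) := hVdeq ▸ subset_convexHull ℝ _ hv
    have hpair := hvd _ hx
    rw [pairR_sum_left] at hpair
    calc (-1:ℝ) ≤ ∑ i, pairR (u i) v := hpair
    _ = ∑ i, m i v := Finset.sum_congr rfl fun i _ => (hue i).symm
  have dichotomy : ∀ v ∈ Vd, ∀ i₀, m i₀ v ≠ 0 → (∀ i, i ≠ i₀ → m i v = 0) := by
    intro v hv i₀ hne0
    obtain ⟨z, hz⟩ := m_int i₀ v (hVdlat v hv)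
    have hzneg : m i₀ v < 0 := lt_of_le_of_ne (m_nonpos i₀ v) hne0
    have hzle : m i₀ v ≤ -1 := by
      rw [hz] at hzneg ⊢
      have hz0 : z < 0 := by exact_mod_cast hzneg
      have hz1 : z ≤ -1 := by omega
      exact_mod_cast hz1
    have hsplit : ∑ i, m i v = m i₀ v + ∑ i ∈ Finset.univ.erase i₀, m i v :=
      (Finset.add_sum_erase _ _ (Finset.mem_univ i₀)).symm
    have hrest : (0:ℝ) ≤ ∑ i ∈ Finset.univ.erase i₀, m i v := by
      have := hsum_m_ge v hv
      rw [hsplit] at this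
      linarith
    have hsum0 : ∑ i ∈ Finset.univ.erase i₀, m i v = 0 :=
      le_antisymm (Finset.sum_nonpos fun j _ => m_nonpos j v) hrest
    have hall := (Finset.sum_eq_zero_iff_of_nonpos (fun j _ => m_nonpos j v)).1 hsum0
    intro i hi
    exact hall i (Finset.mem_erase.2 ⟨hi, Finset.mem_univ i⟩)
  -- the chi property from relative interior membership
  have χ : ∀ K : Finset (Fin r), (0 : Fin d → ℝ) ∈ intrinsicInterior ℝ (minkSumOver K Δ) →
      ∀ vv : Fin d → ℝ, (∀ i ∈ K, m i vv = 0) → ∀ i ∈ K, ∀ x ∈ Δ i, pairR x vv = 0 := by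
    intro K hK vv hmv i hiK x hx
    have hCK0 : (0 : Fin d → ℝ) ∈ minkSumOver K Δ := zero_mem_minkSumOver h0Δ K
    have hlower : ∀ z ∈ minkSumOver K Δ, 0 ≤ pairR z vv := by
      rintro z ⟨f, hf, rfl⟩
      rw [pairR_sum_left]
      exact Finset.sum_nonneg fun j hj => (hmv j hj) ▸ m_le j vv (f j) (hf j hj)
    have hxK : x ∈ minkSumOver K Δ := single_mem_minkSumOver h0Δ hiK hx
    obtain ⟨δ, hδ, hmem⟩ := absorb_of_mem_intrinsicInterior hCK0 hK x hxK
    have h1 : 0 ≤ pairR x vv := hlower x hxK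
    have h2 : 0 ≤ pairR ((-δ) • x) vv := hlower _ hmem
    rw [pairR_smul_left] at h2
    nlinarith
  -- the key dual-vanishing statement
  set C := minkSumOver J Δ with hC
  set F := BF J V with hF
  have hCF : C = convexHull ℝ ((F : Finset (Fin d → ℝ)) : Set (Fin d → ℝ)) :=
    minkSumOver_eq_hull hVne hVeq J
  have hFne : F.Nonempty := BF_nonempty hVne
  have hstar : ∀ y : Fin d → ℝ, (∀ x ∈ C, 0 ≤ pairR x y) → ∀ x ∈ C, pairR x y = 0 := by
    intro y hy
    have hm0 : ∀ i ∈ J, m i y = 0 := by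
      intro i hiJ
      refine le_antisymm (m_nonpos i y) ?_
      obtain ⟨u, hu, hue⟩ := m_attain i y
      have huΔ : u ∈ Δ i := (hVeq i) ▸ subset_convexHull ℝ _ hu
      have := hy u (single_mem_minkSumOver h0Δ hiJ huΔ)
      rw [hue]
      exact this
    obtain ⟨xb, hxbB, hxbmin⟩ :=
      Finset.exists_min_image (BF Finset.univ V) (fun x => pairR x y) (BF_nonempty hVne)
    have hxbfull : xb ∈ minkSum Δ := hfull ▸ subset_convexHull ℝ _ hxbB
    have hxbglobal : ∀ z ∈ minkSum Δ, pairR xb y ≤ pairR z y := by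
      intro z hz
      rw [hfull] at hz
      exact hull_pair_ge (fun u hu => hxbmin u hu) z hz
    obtain ⟨fb, hfb, hfbeq⟩ := mem_BF hxbB
    have hfbΔ : ∀ i, fb i ∈ Δ i := fun i => (hVeq i) ▸ subset_convexHull ℝ _ (hfb i)
    set A := Vd.filter (fun v => pairR xb v = -1) with hA
    have hAsub : A ⊆ Vd := Finset.filter_subset _ _
    have hxbge : ∀ v ∈ Vd, (-1:ℝ) ≤ pairR xb v := by
      intro v hv
      exact (hVdeq ▸ subset_convexHull ℝ _ hv : v ∈ dualPoly (minkSum Δ)) _ hxbfull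
    have hkey : ∀ v ∈ A, ∀ i, pairR (fb i) v = m i v := by
      intro v hvA i
      have hv : v ∈ Vd := hAsub hvA
      have hsum : ∑ j, pairR (fb j) v = -1 := by
        rw [← pairR_sum_left, ← hfbeq]
        exact (Finset.mem_filter.1 hvA).2
      have hge : ∀ j, m j v ≤ pairR (fb j) v := fun j => Finset.inf'_le _ (hfb j)
      by_contra hne
      have hlt : m i v < pairR (fb i) v := lt_of_le_of_ne (hge i) fun hc => hne hc.symm
      have hslt : ∑ j, m j v < ∑ j, pairR (fb j) v :=
        Finset.sum_lt_sum (fun j _ => hge j) ⟨i, Finset.mem_univ i, hlt⟩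
      rw [hsum] at hslt
      linarith [hsum_m_ge v hv]
    have hfark : ∀ dv : Fin d → ℝ, (∀ v ∈ A, 0 ≤ pairR v dv) → 0 ≤ pairR y dv := by
      intro dv hdv
      set ε := Vd.inf' hVdne
        (fun v => if pairR dv v < 0 then (pairR xb v + 1) / (-(pairR dv v)) else 1) with hε
      have hεpos : 0 < ε := by
        rw [hε]
        refine (Finset.lt_inf'_iff _).2 fun v hv => ?_
        split
        · rename_i hneg
          have hvnA : v ∉ A := by
            intro hvA
            have := hdv v hvA
            rw [pairR_comm] at this
            linarith
          have hne1 : pairR xb v ≠ -1 := fun hc => hvnA (Finset.mem_filter.2 ⟨hv, hc⟩)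
          have h1 : -1 < pairR xb v := lt_of_le_of_ne (hxbge v hv) (Ne.symm hne1)
          apply div_pos (by linarith) (by linarith)
        · norm_num
      have hin : xb + ε • dv ∈ minkSum Δ := by
        apply bipolar_mem hfullconv hfullclosed h0full hVdeq
        intro v hv
        rw [pairR_add_left, pairR_smul_left]
        by_cases hneg : pairR dv v < 0
        · have hεle : ε ≤ (pairR xb v + 1) / (-(pairR dv v)) := by
            have hle := Finset.inf'_le
              (f := fun v => if pairR dv v < 0 then (pairR xb v + 1) / (-(pairR dv v)) else 1) hv
            rw [hε]
            simpa only [if_pos hneg] using hle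
          have hmul : ε * (-(pairR dv v)) ≤ pairR xb v + 1 :=
            (le_div_iff₀ (by linarith)).1 hεle
          linarith
        · push_neg at hneg
          have := hxbge v hv
          nlinarith [mul_nonneg hεpos.le hneg]
      have hmin := hxbglobal _ hin
      rw [pairR_add_left, pairR_smul_left] at hmin
      have hprod : 0 ≤ ε * pairR dv y := by linarith
      rw [pairR_comm]
      by_contra hn
      push_neg at hn
      nlinarith
    obtain ⟨lam, hlam0, hyrep⟩ := farkas A y hfark
    have hident : ∀ i ∈ J, ∀ v ∈ A, lam v * m i v = 0 := by
      intro i hiJ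
      have hmy : m i y = ∑ v ∈ A, lam v * m i v := by
        apply le_antisymm
        · calc m i y ≤ pairR (fb i) y := Finset.inf'_le _ (hfb i)
          _ = ∑ v ∈ A, lam v * pairR (fb i) v := by
              rw [hyrep, pairR_sum_right]
              exact Finset.sum_congr rfl fun v _ => pairR_smul_right _ _ _
          _ = ∑ v ∈ A, lam v * m i v :=
              Finset.sum_congr rfl fun v hv => by rw [hkey v hv i]
        · refine (Finset.le_inf'_iff (hVne i) _).2 fun u hu => ?_
          rw [hyrep, pairR_sum_right]
          apply Finset.sum_le_sum
          intro v hv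
          rw [pairR_smul_right]
          exact mul_le_mul_of_nonneg_left (Finset.inf'_le _ hu) (hlam0 v)
      intro v hv
      have hsum0 : ∑ v ∈ A, lam v * m i v = 0 := by rw [← hmy, hm0 i hiJ]
      have hterm : ∀ w ∈ A, lam w * m i w ≤ 0 :=
        fun w _ => mul_nonpos_iff.2 (Or.inl ⟨hlam0 w, m_nonpos i w⟩)
      exact (Finset.sum_eq_zero_iff_of_nonpos hterm).1 hsum0 v hv
    have hgood : ∀ v ∈ A, (∀ i ∈ J, m i v = 0) → ∀ i ∈ J, ∀ x ∈ Δ i, pairR x v = 0 := by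
      intro v hvA hvJ i hiJ x hx
      by_cases hall : ∀ i', m i' v = 0
      · exact χ I hI0 v (fun i' _ => hall i') i (hJI hiJ) x hx
      · push_neg at hall
        obtain ⟨i₀, hi₀⟩ := hall
        have hrest := dichotomy v (hAsub hvA) i₀ hi₀
        have hi₀J : i₀ ∉ J := fun hc => hi₀ (hvJ i₀ hc)
        by_cases hi₀I : i₀ ∈ I
        · have hi₀I' : i₀ ∉ I' := fun hc => hi₀J (hJ ▸ Finset.mem_inter.2 ⟨hi₀I, hc⟩)
          exact χ I' hI'0 v (fun i' hi' => hrest i' fun hc => hi₀I' (hc ▸ hi'))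
            i (hJI' hiJ) x hx
        · exact χ I hI0 v (fun i' hi' => hrest i' fun hc => hi₀I (hc ▸ hi'))
            i (hJI hiJ) x hx
    rintro x ⟨fx, hfx, rfl⟩
    rw [pairR_sum_left]
    apply Finset.sum_eq_zero
    intro i hiJ
    rw [hyrep, pairR_sum_right]
    apply Finset.sum_eq_zero
    intro v hvA
    rw [pairR_smul_right]
    by_cases hvJ : ∀ i' ∈ J, m i' v = 0
    · rw [hgood v hvA hvJ i hiJ (fx i) (hfx i hiJ), mul_zero]
    · push_neg at hvJ
      obtain ⟨i', hi'J, hi'⟩ := hvJ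
      have hzero := hident i' hi'J v hvA
      have hlamv : lam v = 0 := by
        rcases mul_eq_zero.1 hzero with hcase | hcase
        · exact hcase
        · exact absurd hcase hi'
      rw [hlamv, zero_mul]
  -- Stiemke step : a strictly positive vanishing combination of the generators
  have hstep1 : ∀ u ∈ F, (-u) ∈ coneOf F := by
    intro u hu
    apply farkas
    intro dv hdv
    have hCge : ∀ x ∈ C, 0 ≤ pairR x dv := by
      intro x hx
      rw [hCF] at hx
      exact hull_pair_ge (fun w hw => hdv w hw) x hx
    have hzero := hstar dv hCge u (hCF ▸ subset_convexHull ℝ _ hu)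
    rw [pairR_neg_left, hzero]
    norm_num
  choose nu hnu0 hnueq using fun u : {y // y ∈ F} => hstep1 u u.2
  set ν : (Fin d → ℝ) → ℝ := fun v => 1 + ∑ u ∈ F.attach, nu u v with hν
  have hν1 : ∀ v ∈ F, (1:ℝ) ≤ ν v := by
    intro v _
    simp only [hν]
    have : (0:ℝ) ≤ ∑ u ∈ F.attach, nu u v := Finset.sum_nonneg fun u _ => hnu0 u v
    linarith
  have hνcombo : ∑ v ∈ F, ν v • v = 0 := by
    simp only [hν, add_smul, one_smul, Finset.sum_add_distrib]
    have hswap : ∑ v ∈ F, (∑ u ∈ F.attach, nu u v) • v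
        = ∑ u ∈ F.attach, ∑ v ∈ F, nu u v • v := by
      rw [Finset.sum_congr rfl (fun v _ => Finset.sum_smul)]
      exact Finset.sum_comm
    rw [hswap, Finset.sum_congr rfl (fun u _ => (hnueq u).symm),
      Finset.sum_attach F (fun v => -v)]
    rw [← Finset.sum_add_distrib]
    simp
  set N := ∑ v ∈ F, ν v with hN
  have hNpos : 0 < N := by
    have h1 : (F.card : ℝ) ≤ N := by
      rw [hN]
      calc (F.card : ℝ) = ∑ _v ∈ F, (1:ℝ) := by simp
      _ ≤ ∑ v ∈ F, ν v := Finset.sum_le_sum fun v hv => hν1 v hv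
    have hcard : 0 < (F.card : ℝ) := by exact_mod_cast Finset.card_pos.2 hFne
    linarith
  have relint := relint_of_pos_combo F hFne (fun v => ν v / N)
    (fun u hu => div_pos (lt_of_lt_of_le one_pos (hν1 u hu)) hNpos)
    (by rw [← Finset.sum_div, ← hN]; field_simp)
    (by
      have hsmul : ∑ v ∈ F, (ν v / N) • v = N⁻¹ • ∑ v ∈ F, ν v • v := by
        rw [Finset.smul_sum]
        exact Finset.sum_congr rfl fun v _ => by rw [smul_smul, div_eq_inv_mul]
      rw [hsmul, hνcombo, smul_zero])
  rw [hCF]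
  exact relint

end CoreLemma

/-- For a centered proper nef-partition, any two distinct irreducible
subsets of `{1, …, r}` are disjoint; here `I` is irreducible if `0` lies in the relative
interior of `Δ^I` and of `Δ^{I'}` for no nonempty proper subset `I' ⊊ I`. -/
theorem irreducible_subsets_disjoint {d r : ℕ}
    (Δ : Fin r → Set (Fin d → ℝ))
    (h : IsCenteredNefPartition Δ)
    (hproper : ∀ i, 0 < polyDim (Δ i)) :
    ∀ I I' : Finset (Fin r),
      (I.Nonempty ∧ (0 : Fin d → ℝ) ∈ intrinsicInterior ℝ (minkSumOver I Δ) ∧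
        ∀ I'' : Finset (Fin r), I'' ⊂ I → I''.Nonempty →
          (0 : Fin d → ℝ) ∉ intrinsicInterior ℝ (minkSumOver I'' Δ)) →
      (I'.Nonempty ∧ (0 : Fin d → ℝ) ∈ intrinsicInterior ℝ (minkSumOver I' Δ) ∧
        ∀ I'' : Finset (Fin r), I'' ⊂ I' → I''.Nonempty →
          (0 : Fin d → ℝ) ∉ intrinsicInterior ℝ (minkSumOver I'' Δ)) →
      I ≠ I' → Disjoint I I' := by
  intro I I' hI hI' hne
  by_contra hdis
  obtain ⟨a, haI, haI'⟩ := Finset.not_disjoint_iff.1 hdis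
  set J := I ∩ I' with hJ
  have hJne : J.Nonempty := ⟨a, Finset.mem_inter.2 ⟨haI, haI'⟩⟩
  by_cases hJI : J = I
  · have hsub : I ⊆ I' := Finset.inter_eq_left.1 hJI
    have hss : I ⊂ I' := Finset.ssubset_iff_subset_ne.2 ⟨hsub, hne⟩
    exact hI'.2.2 I hss hI.1 hI.2.1
  · by_cases hJI' : J = I'
    · have hsub : I' ⊆ I := Finset.inter_eq_right.1 hJI'
      have hss : I' ⊂ I := Finset.ssubset_iff_subset_ne.2 ⟨hsub, Ne.symm hne⟩
      exact hI.2.2 I' hss hI'.1 hI'.2.1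
    · have hssI : J ⊂ I := Finset.ssubset_iff_subset_ne.2 ⟨hJ ▸ Finset.inter_subset_left, hJI⟩
      exact hI.2.2 J hssI hJne (nef_core Δ h I I' J hJ hJne hI.2.1 hI'.2.1)
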